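/- The ratio s/r is uniformly bounded below by 5 - 2√6 over all pairs (r,s) with 0 < s < r < 1 that allow a compact packing of the plane with all three sizes of discs 1, r, s. -/

import Mathlib

open Real
open scoped RealInnerProductSpace

/-- The angle at the center of the disc of radius `c` in the triangle of centers of three
pairwise externally tangent discs of radii `x`, `c`, `y` (law of cosines). -/
noncomputable def contactAngle (x c y : ℝ) : ℝ :=
  Real.arccos (((x+c)^2 + (y+c)^2 - (x+y)^2) / (2*(x+c)*(y+c)))

/-- A packing of the plane: a set of discs (center, radius) with positive radii whose
interiors are pairwise disjoint. -/
structure DiscPacking where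
  discs : Set ((EuclideanSpace ℝ (Fin 2)) × ℝ)
  radius_pos : ∀ d ∈ discs, 0 < d.2
  separated : ∀ d ∈ discs, ∀ e ∈ discs, d ≠ e → d.2 + e.2 ≤ dist d.1 e.1

/-- Two discs are (externally) tangent. -/
def Tangent (d e : (EuclideanSpace ℝ (Fin 2)) × ℝ) : Prop :=
  dist d.1 e.1 = d.2 + e.2

/-- The disc `d` is surrounded in `P` by a corona: a cyclic sequence of consecutively
tangent discs of `P`, all tangent to `d`, containing every disc of `P` tangent to `d`,
whose angles at the center of `d` sum to `2π`. -/
def HasCorona (P : DiscPacking) (d : (EuclideanSpace ℝ (Fin 2)) × ℝ) : Prop :=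
  ∃ n : ℕ, 3 ≤ n ∧ ∃ c : Fin n → (EuclideanSpace ℝ (Fin 2)) × ℝ,
    Function.Injective c ∧
    (∀ i, c i ∈ P.discs) ∧
    (∀ i, Tangent d (c i)) ∧
    (∀ i : Fin n, Tangent (c i) (c ⟨(i.val + 1) % n, Nat.mod_lt _ i.pos⟩)) ∧
    (∀ e ∈ P.discs, Tangent d e → ∃ i, c i = e) ∧
    (∑ i : Fin n,
      contactAngle (c i).2 d.2 ((c ⟨(i.val + 1) % n, Nat.mod_lt _ i.pos⟩).2) = 2 * Real.pi)

/-- A compact packing: every disc is surrounded by a corona. -/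
def IsCompactPacking (P : DiscPacking) : Prop :=
  P.discs.Nonempty ∧ ∀ d ∈ P.discs, HasCorona P d


section Aux


noncomputable def Qv (x c y : ℝ) : ℝ :=
  ((x+c)^2 + (y+c)^2 - (x+y)^2) / (2*(x+c)*(y+c))

-- basic sqrt facts
lemma sqrt6_sq : Real.sqrt 6 ^ 2 = 6 := Real.sq_sqrt (by norm_num)
lemma sqrt6_lb : (2.44 : ℝ) ≤ Real.sqrt 6 := by
  rw [show (6:ℝ) = 2.44^2 + 0.0464 by norm_num]
  nlinarith [Real.sq_sqrt (show (0:ℝ) ≤ 6 by norm_num), Real.sqrt_nonneg 6]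
lemma sqrt6_ub : Real.sqrt 6 ≤ (2.45 : ℝ) := by
  nlinarith [Real.sq_sqrt (show (0:ℝ) ≤ 6 by norm_num), Real.sqrt_nonneg 6]
lemma sqrt2_lb : (1.41 : ℝ) ≤ Real.sqrt 2 := by
  nlinarith [Real.sq_sqrt (show (0:ℝ) ≤ 2 by norm_num), Real.sqrt_nonneg 2]
lemma sqrt2_ub : Real.sqrt 2 ≤ (1.42 : ℝ) := by
  nlinarith [Real.sq_sqrt (show (0:ℝ) ≤ 2 by norm_num), Real.sqrt_nonneg 2]
lemma sqrt3_lb : (1.73 : ℝ) ≤ Real.sqrt 3 := by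
  nlinarith [Real.sq_sqrt (show (0:ℝ) ≤ 3 by norm_num), Real.sqrt_nonneg 3]
lemma sqrt3_ub : Real.sqrt 3 ≤ (1.74 : ℝ) := by
  nlinarith [Real.sq_sqrt (show (0:ℝ) ≤ 3 by norm_num), Real.sqrt_nonneg 3]

lemma arccos_anti {x y : ℝ} (h : x ≤ y) : Real.arccos y ≤ Real.arccos x := by
  rw [Real.arccos_eq_pi_div_two_sub_arcsin, Real.arccos_eq_pi_div_two_sub_arcsin]
  have := Real.monotone_arcsin h
  linarith

lemma arccos_strict {x y : ℝ} (h1 : -1 ≤ x) (hxy : x < y) (h2 : y ≤ 1) :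
    Real.arccos y < Real.arccos x :=
  Real.strictAntiOn_arccos ⟨h1, hxy.le.trans h2⟩ ⟨h1.trans hxy.le, h2⟩ hxy

lemma arccos_half_eq : Real.arccos (1/2 : ℝ) = π/3 := by
  rw [← Real.cos_pi_div_three]
  exact Real.arccos_cos (by positivity) (by linarith [Real.pi_pos])

noncomputable def β₀ : ℝ := Real.arccos ((3 + Real.sqrt 6)/6)
noncomputable def A₀ : ℝ := Real.arccos ((1 - 2*Real.sqrt 6)/6)
noncomputable def B₀ : ℝ := Real.arccos ((3 - Real.sqrt 6)/6)

lemma beta_mem : (0:ℝ) ≤ β₀ ∧ β₀ ≤ π/2 := by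
  constructor
  · exact Real.arccos_nonneg _
  · rw [β₀, Real.arccos_le_pi_div_two]
    nlinarith [sqrt6_lb]

lemma cos_beta : Real.cos β₀ = (3 + Real.sqrt 6)/6 := by
  apply Real.cos_arccos
  · nlinarith [sqrt6_lb]
  · nlinarith [sqrt6_ub]

lemma sin_beta : Real.sin β₀ = (3*Real.sqrt 2 - Real.sqrt 3)/6 := by
  rw [β₀, Real.sin_arccos]
  rw [show (1:ℝ) - ((3 + Real.sqrt 6)/6)^2 = ((3*Real.sqrt 2 - Real.sqrt 3)/6)^2 by
    have h23 : Real.sqrt 2 * Real.sqrt 3 = Real.sqrt 6 := by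
      rw [← Real.sqrt_mul (by norm_num : (0:ℝ) ≤ 2)]; norm_num
    have h2 := Real.sq_sqrt (show (0:ℝ) ≤ 2 by norm_num)
    have h3 := Real.sq_sqrt (show (0:ℝ) ≤ 3 by norm_num)
    have h6 := sqrt6_sq
    nlinarith [h23, h2, h3, h6]]
  apply Real.sqrt_sq
  nlinarith [sqrt2_lb, sqrt3_ub]

lemma hB_eq : B₀ = β₀ + π/3 := by
  have h1 : Real.cos (β₀ + π/3) = (3 - Real.sqrt 6)/6 := by
    rw [Real.cos_add, Real.cos_pi_div_three, Real.sin_pi_div_three, cos_beta, sin_beta]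
    have h23 : Real.sqrt 3 * Real.sqrt 2 = Real.sqrt 6 := by
      rw [← Real.sqrt_mul (by norm_num : (0:ℝ) ≤ 3)]; norm_num
    have h3 := Real.sq_sqrt (show (0:ℝ) ≤ 3 by norm_num)
    nlinarith [h23, h3]
  rw [B₀, ← h1]
  apply Real.arccos_cos
  · have := beta_mem.1; linarith [Real.pi_pos]
  · have := beta_mem.2; linarith [Real.pi_pos]

lemma hA_eq : A₀ = π - 2*β₀ := by
  have h1 : Real.cos (π - 2*β₀) = (1 - 2*Real.sqrt 6)/6 := by
    rw [Real.cos_pi_sub, Real.cos_two_mul, cos_beta]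
    nlinarith [sqrt6_sq]
  rw [A₀, ← h1]
  apply Real.arccos_cos
  · have := beta_mem.2; linarith
  · have := beta_mem.1; linarith

lemma beta_le : β₀ ≤ π/6 := by
  have h : Real.cos (π/6) ≤ (3 + Real.sqrt 6)/6 := by
    rw [Real.cos_pi_div_six]
    nlinarith [sqrt6_lb, sqrt3_ub]
  have := arccos_anti h
  rwa [Real.arccos_cos (by positivity) (by linarith [Real.pi_pos])] at this

lemma beta_ge : π/12 ≤ β₀ := by
  have hc : Real.cos (π/12) = Real.sqrt 2/4 + Real.sqrt 6/4 := by
    rw [show (π/12 : ℝ) = π/3 - π/4 by ring, Real.cos_sub, Real.cos_pi_div_three,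
      Real.sin_pi_div_three, Real.cos_pi_div_four, Real.sin_pi_div_four]
    have h23 : Real.sqrt 3 * Real.sqrt 2 = Real.sqrt 6 := by
      rw [← Real.sqrt_mul (by norm_num : (0:ℝ) ≤ 3)]; norm_num
    nlinarith [h23]
  have h : (3 + Real.sqrt 6)/6 ≤ Real.cos (π/12) := by
    rw [hc]; nlinarith [sqrt6_lb, sqrt2_lb]
  have h2 := arccos_anti h
  rw [Real.arccos_cos (by positivity) (by linarith [Real.pi_pos])] at h2
  exact h2



section QvFacts
variable {x y c x' : ℝ}

lemma Qv_symm (x c y : ℝ) : Qv x c y = Qv y c x := by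
  unfold Qv; rw [show 2*(x+c)*(y+c) = 2*(y+c)*(x+c) by ring]; ring_nf

lemma Qv_add_one (hx : 0 < x) (hc : 0 < c) (hy : 0 < y) :
    Qv x c y + 1 = 2*c*(c+x+y) / ((x+c)*(y+c)) := by
  unfold Qv; field_simp; ring

lemma Qv_gt_neg_one (hx : 0 < x) (hc : 0 < c) (hy : 0 < y) : -1 < Qv x c y := by
  have h := Qv_add_one hx hc hy
  have : 0 < 2*c*(c+x+y) / ((x+c)*(y+c)) := by positivity
  linarith

lemma Qv_lt_one (hx : 0 < x) (hc : 0 < c) (hy : 0 < y) : Qv x c y < 1 := by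
  have h : 1 - Qv x c y = 2*x*y/((x+c)*(y+c)) := by unfold Qv; field_simp; ring
  have : 0 < 2*x*y/((x+c)*(y+c)) := by positivity
  linarith

lemma Qv_repr (hx : 0 < x) (hc : 0 < c) (hy : 0 < y) :
    Qv x c y = (c-y)/(c+y) + 2*c*y/((c+y)*(x+c)) := by
  unfold Qv; field_simp; ring

lemma Qv_anti (hc : 0 < c) (hy : 0 < y) (hx' : 0 < x') (hxx : x' ≤ x) :
    Qv x c y ≤ Qv x' c y := by
  have hx : 0 < x := lt_of_lt_of_le hx' hxx
  rw [Qv_repr hx hc hy, Qv_repr hx' hc hy]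
  have h1 : 2*c*y/((c+y)*(x+c)) ≤ 2*c*y/((c+y)*(x'+c)) := by
    apply div_le_div_of_nonneg_left (by positivity) (by positivity)
    nlinarith
  linarith
end QvFacts

-- key polynomial inequalities, t = sqrt 6
section Poly
variable {r s : ℝ}

lemma Qrr_lt (hs : 0 < s) (hr : 0 < r) (hlt : s < (5 - 2*Real.sqrt 6)*r) :
    Qv r s r < (1 - 2*Real.sqrt 6)/6 := by
  set t := Real.sqrt 6 with ht'
  have ht : t^2 = 6 := Real.sq_sqrt (by norm_num)
  have htlb : (2.44:ℝ) ≤ t := by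
    nlinarith [Real.sq_sqrt (show (0:ℝ) ≤ 6 by norm_num), Real.sqrt_nonneg 6]
  have htub : t ≤ (2.45:ℝ) := by
    nlinarith [Real.sq_sqrt (show (0:ℝ) ≤ 6 by norm_num), Real.sqrt_nonneg 6]
  have hden : 0 < 2*(r+s)*(r+s) := by positivity
  unfold Qv
  rw [div_lt_div_iff₀ hden (by norm_num : (0:ℝ) < 6)]
  -- 6 * ((r+s)^2+(r+s)^2-(2r)^2) < (1-2t) * (2 (r+s)^2)
  have hP : 0 < ((5-2*t)*r - s) * (s + (7-2*t)*r) := by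
    apply mul_pos (by linarith) (by nlinarith)
  nlinarith [hP, mul_pos hs hr]

lemma Qrs_lt (hs : 0 < s) (hr : 0 < r) (hlt : s < (5 - 2*Real.sqrt 6)*r) :
    Qv r s s < (3 - Real.sqrt 6)/6 := by
  set t := Real.sqrt 6 with ht'
  have ht : t^2 = 6 := Real.sq_sqrt (by norm_num)
  have htlb : (2.44:ℝ) ≤ t := by
    nlinarith [Real.sq_sqrt (show (0:ℝ) ≤ 6 by norm_num), Real.sqrt_nonneg 6]
  have htub : t ≤ (2.45:ℝ) := by
    nlinarith [Real.sq_sqrt (show (0:ℝ) ≤ 6 by norm_num), Real.sqrt_nonneg 6]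
  have h1 : Qv r s s = s/(r+s) := by unfold Qv; field_simp; ring
  rw [h1, div_lt_div_iff₀ (by linarith) (by norm_num : (0:ℝ) < 6)]
  -- 6 s < (3 - t)(r+s)
  nlinarith [hlt, mul_pos hr hs]

lemma Qss (hs : 0 < s) : Qv s s s = 1/2 := by
  unfold Qv; rw [div_eq_iff (by positivity)]; ring
end Poly



-- parity of the number of sign changes around a cycle
lemma even_changes {n : ℕ} [NeZero n] (B : Fin n → Prop) [DecidablePred B] :
    Even (Finset.univ.filter
      (fun i : Fin n => (B i ∧ ¬ B (i+1)) ∨ (¬ B i ∧ B (i+1)))).card := by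
  classical
  set g : Fin n → ZMod 2 := fun i => if B i then 1 else 0 with hg
  have hcard := Finset.card_filter
    (fun i : Fin n => (B i ∧ ¬ B (i+1)) ∨ (¬ B i ∧ B (i+1))) Finset.univ
  have hcast : ((Finset.univ.filter
      (fun i : Fin n => (B i ∧ ¬ B (i+1)) ∨ (¬ B i ∧ B (i+1)))).card : ZMod 2)
      = ∑ i : Fin n, (g i + g (i+1)) := by
    rw [hcard]
    push_cast
    apply Finset.sum_congr rfl
    intro i _
    by_cases h1 : B i <;> by_cases h2 : B (i+1) <;> simp [g, h1, h2] <;> decide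
  rw [Finset.sum_add_distrib] at hcast
  have hre : ∑ i : Fin n, g (i+1) = ∑ i : Fin n, g i :=
    Equiv.sum_comp (Equiv.addRight (1 : Fin n)) g
  rw [hre] at hcast
  have : ((Finset.univ.filter
      (fun i : Fin n => (B i ∧ ¬ B (i+1)) ∨ (¬ B i ∧ B (i+1)))).card : ZMod 2) = 0 := by
    rw [hcast]
    have hz : ∀ z : ZMod 2, z + z = 0 := by decide
    exact hz _
  exact ZMod.natCast_eq_zero_iff_even.mp this

-- constancy around the cycle if no changes
open Fin.NatCast in
lemma cycle_const {n : ℕ} [NeZero n] (B : Fin n → Prop)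
    (hno : ∀ i : Fin n, B i ↔ B (i+1)) (i₀ : Fin n) (hB : B i₀) : ∀ j, B j := by
  have key : ∀ m : ℕ, B (i₀ + (m : Fin n)) := by
    intro m
    induction m with
    | zero => simpa using hB
      -- m = 0
    | succ m ih =>
      have : ((m+1 : ℕ) : Fin n) = (m : Fin n) + 1 := by push_cast; ring
      rw [this, ← add_assoc]
      exact (hno (i₀ + (m : Fin n))).mp ih
  intro j
  have := key (j - i₀).val
  rwa [Fin.cast_val_eq_self, add_sub_cancel] at this

lemma Qv_bs {x s : ℝ} (hx : 0 < x) (hs : 0 < s) : Qv x s s = s/(x+s) := by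
  unfold Qv; field_simp; ring

-- arithmetic case bash
lemma combin (k m₁ m₂ n : ℕ) (A B : ℝ) (hn : 3 ≤ n) (hsumn : k + m₁ + m₂ = n)
    (hA : 2*π/3 ≤ A) (hB : 5*π/12 ≤ B) (hABC : 2*π ≤ A + 2*B + π/3)
    (hW : 13 ≤ 6*k+3*m₁+2*m₂) (hpar : Even m₁) (h0 : m₁ = 0 → m₂ = 0) :
    2*π ≤ (k:ℝ)*A + (m₁:ℝ)*B + (m₂:ℝ)*(π/3) := by
  have hπ := Real.pi_pos
  obtain ⟨j, hj⟩ := hpar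
  have hj2 : m₁ = 2*j := by omega
  subst hj2
  have hm2 : (0:ℝ) ≤ (m₂:ℝ) := Nat.cast_nonneg _
  have hk : (0:ℝ) ≤ (k:ℝ) := Nat.cast_nonneg _
  rcases Nat.lt_or_ge j 3 with hj3 | hj3
  · interval_cases j
    · -- m₁ = 0, so m₂ = 0, k = n ≥ 3
      have hm20 : m₂ = 0 := h0 rfl
      have hkn : 3 ≤ k := by omega
      have : (3:ℝ) ≤ (k:ℝ) := by exact_mod_cast hkn
      subst hm20
      push_cast
      nlinarith
    · -- m₁ = 2
      rcases Nat.lt_or_ge k 2 with hk2 | hk2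
      · interval_cases k
        · -- k = 0: m₂ ≥ 4
          have hm24 : 4 ≤ m₂ := by omega
          have : (4:ℝ) ≤ (m₂:ℝ) := by exact_mod_cast hm24
          push_cast
          nlinarith
        · -- k = 1: m₂ ≥ 1
          have hm21 : 1 ≤ m₂ := by omega
          have : (1:ℝ) ≤ (m₂:ℝ) := by exact_mod_cast hm21
          push_cast
          nlinarith
      · have : (2:ℝ) ≤ (k:ℝ) := by exact_mod_cast hk2
        push_cast
        nlinarith
    · -- m₁ = 4
      rcases Nat.eq_zero_or_pos k with hk0 | hk1
      · subst hk0
        have hm21 : 1 ≤ m₂ := by omega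
        have : (1:ℝ) ≤ (m₂:ℝ) := by exact_mod_cast hm21
        push_cast
        nlinarith
      · have : (1:ℝ) ≤ (k:ℝ) := by exact_mod_cast hk1
        push_cast
        nlinarith
  · -- j ≥ 3 : m₁ ≥ 6
    have : (3:ℝ) ≤ (j:ℝ) := by exact_mod_cast hj3
    push_cast
    nlinarith


set_option maxHeartbeats 1000000 in
lemma coronaBound (r s : ℝ) (hs : 0 < s) (hsr : s < r) (n : ℕ) [NeZero n] (hn : 3 ≤ n)
    (ρ : Fin n → ℝ) (hρbig : ∀ i, ρ i ≠ s → r ≤ ρ i)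
    (hex : ∃ i, ρ i ≠ s)
    (hsum : ∑ i : Fin n, Real.arccos (Qv (ρ i) s (ρ (i+1))) = 2 * π) :
    5 - 2*Real.sqrt 6 ≤ s / r := by
  classical
  have hr : 0 < r := hs.trans hsr
  by_contra hcon
  push_neg at hcon
  have hlt : s < (5 - 2*Real.sqrt 6)*r := by
    rw [div_lt_iff₀ hr] at hcon; linarith
  have hπ := Real.pi_pos
  -- positivity of radii
  have hρpos : ∀ i, 0 < ρ i := by
    intro i
    by_cases h : ρ i = s
    · rw [h]; exact hs
    · exact hr.trans_le (hρbig i h)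
  set B : Fin n → Prop := fun i => ρ i ≠ s with hBdef
  set a : Fin n → ℝ := fun i => Real.arccos (Qv (ρ i) s (ρ (i+1))) with hadef
  set KK := Finset.univ.filter (fun i : Fin n => B i ∧ B (i+1)) with hKK
  set KM := Finset.univ.filter
    (fun i : Fin n => (B i ∧ ¬ B (i+1)) ∨ (¬ B i ∧ B (i+1))) with hKM
  set MM := Finset.univ.filter (fun i : Fin n => ¬ B i ∧ ¬ B (i+1)) with hMM
  -- numeric constant facts
  have hQA1 : (1 - 2*Real.sqrt 6)/6 ≤ 1 := by nlinarith [sqrt6_lb]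
  have hQB1 : (3 - Real.sqrt 6)/6 ≤ 1 := by nlinarith [sqrt6_lb]
  -- bounds on angles
  have hQbig : ∀ x y : ℝ, r ≤ x → r ≤ y → Qv x s y < (1 - 2*Real.sqrt 6)/6 := by
    intro x y hx hy
    have hx0 : 0 < x := hr.trans_le hx
    have hy0 : 0 < y := hr.trans_le hy
    calc Qv x s y ≤ Qv r s y := Qv_anti hs hy0 hr hx
    _ = Qv y s r := Qv_symm _ _ _
    _ ≤ Qv r s r := Qv_anti hs hr hr hy
    _ < (1 - 2*Real.sqrt 6)/6 := Qrr_lt hs hr hlt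
  have hQbs : ∀ x : ℝ, r ≤ x → Qv x s s < (3 - Real.sqrt 6)/6 := by
    intro x hx
    have hx0 : 0 < x := hr.trans_le hx
    calc Qv x s s ≤ Qv r s s := Qv_anti hs hs hr hx
    _ < (3 - Real.sqrt 6)/6 := Qrs_lt hs hr hlt
  have hbig : ∀ i, B i → r ≤ ρ i := fun i hi => hρbig i hi
  have hsmall : ∀ i, ¬ B i → ρ i = s := by
    intro i hi; by_contra h; exact hi h
  have hKKa : ∀ i ∈ KK, A₀ < a i ∧ a i < π := by
    intro i hi
    rw [hKK, Finset.mem_filter] at hi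
    obtain ⟨-, h1, h2⟩ := hi
    have hq := hQbig _ _ (hbig _ h1) (hbig _ h2)
    have hqlo := Qv_gt_neg_one (hρpos i) hs (hρpos (i+1))
    constructor
    · exact arccos_strict hqlo.le hq hQA1
    · refine lt_of_le_of_ne (Real.arccos_le_pi _) (fun h => ?_)
      have := Real.arccos_eq_pi.mp h
      linarith
  have hKMa : ∀ i ∈ KM, B₀ < a i ∧ a i < π/2 := by
    intro i hi
    rw [hKM, Finset.mem_filter] at hi
    obtain ⟨-, hi⟩ := hi
    have hq : Qv (ρ i) s (ρ (i+1)) < (3 - Real.sqrt 6)/6 ∧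
        0 < Qv (ρ i) s (ρ (i+1)) := by
      rcases hi with ⟨h1, h2⟩ | ⟨h1, h2⟩
      · rw [hsmall _ h2]
        refine ⟨hQbs _ (hbig _ h1), ?_⟩
        rw [Qv_bs (hr.trans_le (hbig _ h1)) hs]
        exact div_pos hs (by linarith [hρpos i])
      · rw [hsmall _ h1, Qv_symm]
        refine ⟨hQbs _ (hbig _ h2), ?_⟩
        rw [Qv_bs (hr.trans_le (hbig _ h2)) hs]
        exact div_pos hs (by linarith [hρpos (i+1)])
    constructor
    · exact arccos_strict (by linarith [hq.2] : (-1:ℝ) ≤ _) hq.1 hQB1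
    · exact Real.arccos_lt_pi_div_two.mpr hq.2
  have hMMa : ∀ i ∈ MM, a i = π/3 := by
    intro i hi
    rw [hMM, Finset.mem_filter] at hi
    obtain ⟨-, h1, h2⟩ := hi
    rw [hadef]
    simp only
    rw [hsmall _ h1, hsmall _ h2, Qss hs, arccos_half_eq]
  -- partition
  have hdisj1 : Disjoint KK KM := by
    rw [Finset.disjoint_left]
    intro i hi1 hi2
    rw [hKK, Finset.mem_filter] at hi1
    rw [hKM, Finset.mem_filter] at hi2
    tauto
  have hdisj2 : Disjoint (KK ∪ KM) MM := by
    rw [Finset.disjoint_left]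
    intro i hi1 hi2
    rw [Finset.mem_union, hKK, hKM, Finset.mem_filter, Finset.mem_filter] at hi1
    rw [hMM, Finset.mem_filter] at hi2
    tauto
  have hunion : KK ∪ KM ∪ MM = Finset.univ := by
    ext i
    simp only [Finset.mem_union, hKK, hKM, hMM, Finset.mem_filter, Finset.mem_univ,
      true_and, iff_true]
    tauto
  set k := KK.card
  set m₁ := KM.card
  set m₂ := MM.card
  have hcards : k + m₁ + m₂ = n := by
    rw [← Finset.card_union_of_disjoint hdisj1, ← Finset.card_union_of_disjoint hdisj2,
      hunion, Finset.card_univ, Fintype.card_fin]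
  have hsplit : ∑ i : Fin n, a i = ∑ i ∈ KK, a i + ∑ i ∈ KM, a i + ∑ i ∈ MM, a i := by
    rw [← Finset.sum_union hdisj1, ← Finset.sum_union hdisj2, hunion]
  -- the big-index
  obtain ⟨i₀, hi₀⟩ := hex
  have hi₀B : B i₀ := hi₀
  have hi₀mem : i₀ ∈ KK ∪ KM := by
    rw [Finset.mem_union]
    by_cases h : B (i₀+1)
    · left; rw [hKK, Finset.mem_filter]; exact ⟨Finset.mem_univ _, hi₀B, h⟩
    · right; rw [hKM, Finset.mem_filter]; exact ⟨Finset.mem_univ _, Or.inl ⟨hi₀B, h⟩⟩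
  -- sum over MM
  have hsMM : ∑ i ∈ MM, a i = (m₂ : ℝ) * (π/3) := by
    rw [Finset.sum_congr rfl hMMa, Finset.sum_const, nsmul_eq_mul]
  -- weak bounds
  have hsKKlo : (k:ℝ) * A₀ ≤ ∑ i ∈ KK, a i := by
    calc (k:ℝ) * A₀ = ∑ _i ∈ KK, A₀ := by rw [Finset.sum_const, nsmul_eq_mul]
    _ ≤ ∑ i ∈ KK, a i := Finset.sum_le_sum (fun i hi => (hKKa i hi).1.le)
  have hsKMlo : (m₁:ℝ) * B₀ ≤ ∑ i ∈ KM, a i := by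
    calc (m₁:ℝ) * B₀ = ∑ _i ∈ KM, B₀ := by rw [Finset.sum_const, nsmul_eq_mul]
    _ ≤ ∑ i ∈ KM, a i := Finset.sum_le_sum (fun i hi => (hKMa i hi).1.le)
  have hsKKhi : ∑ i ∈ KK, a i ≤ (k:ℝ) * π := by
    calc ∑ i ∈ KK, a i ≤ ∑ _i ∈ KK, π := Finset.sum_le_sum (fun i hi => (hKKa i hi).2.le)
    _ = (k:ℝ) * π := by rw [Finset.sum_const, nsmul_eq_mul]
  have hsKMhi : ∑ i ∈ KM, a i ≤ (m₁:ℝ) * (π/2) := by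
    calc ∑ i ∈ KM, a i ≤ ∑ _i ∈ KM, (π/2) :=
      Finset.sum_le_sum (fun i hi => (hKMa i hi).2.le)
    _ = (m₁:ℝ) * (π/2) := by rw [Finset.sum_const, nsmul_eq_mul]
  -- strict improvements at i₀
  have hstrictlo : (k:ℝ) * A₀ + (m₁:ℝ) * B₀ + (m₂:ℝ)*(π/3) < 2*π := by
    rw [← hsum, hsplit, ← hadef, hsMM]
    rcases Finset.mem_union.mp hi₀mem with hm | hm
    · have : (k:ℝ) * A₀ < ∑ i ∈ KK, a i := by
        calc (k:ℝ) * A₀ = ∑ _i ∈ KK, A₀ := by rw [Finset.sum_const, nsmul_eq_mul]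
        _ < ∑ i ∈ KK, a i :=
          Finset.sum_lt_sum_of_nonempty ⟨i₀, hm⟩ (fun i hi => (hKKa i hi).1)
      linarith
    · have : (m₁:ℝ) * B₀ < ∑ i ∈ KM, a i := by
        calc (m₁:ℝ) * B₀ = ∑ _i ∈ KM, B₀ := by rw [Finset.sum_const, nsmul_eq_mul]
        _ < ∑ i ∈ KM, a i :=
          Finset.sum_lt_sum_of_nonempty ⟨i₀, hm⟩ (fun i hi => (hKMa i hi).1)
      linarith
  have hstricthi : 2*π < (k:ℝ) * π + (m₁:ℝ) * (π/2) + (m₂:ℝ)*(π/3) := by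
    rw [← hsum, hsplit, ← hadef, hsMM]
    rcases Finset.mem_union.mp hi₀mem with hm | hm
    · have : ∑ i ∈ KK, a i < (k:ℝ) * π := by
        calc ∑ i ∈ KK, a i < ∑ _i ∈ KK, π :=
          Finset.sum_lt_sum_of_nonempty ⟨i₀, hm⟩ (fun i hi => (hKKa i hi).2)
        _ = (k:ℝ) * π := by rw [Finset.sum_const, nsmul_eq_mul]
      linarith
    · have : ∑ i ∈ KM, a i < (m₁:ℝ) * (π/2) := by
        calc ∑ i ∈ KM, a i < ∑ _i ∈ KM, (π/2) :=
          Finset.sum_lt_sum_of_nonempty ⟨i₀, hm⟩ (fun i hi => (hKMa i hi).2)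
        _ = (m₁:ℝ) * (π/2) := by rw [Finset.sum_const, nsmul_eq_mul]
      linarith
  -- W ≥ 13
  have hW : 13 ≤ 6*k + 3*m₁ + 2*m₂ := by
    by_contra hW'
    push_neg at hW'
    have : (6*k + 3*m₁ + 2*m₂ : ℝ) ≤ 12 := by
      have : (6*k + 3*m₁ + 2*m₂ : ℕ) ≤ 12 := by omega
      exact_mod_cast this
    push_cast at this
    nlinarith [hstricthi]
  -- parity
  have hpar : Even m₁ := even_changes B
  -- constancy
  have h0 : m₁ = 0 → m₂ = 0 := by
    intro hm10
    have hKMempty : KM = ∅ := Finset.card_eq_zero.mp hm10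
    have hno : ∀ i : Fin n, B i ↔ B (i+1) := by
      intro i
      have : i ∉ KM := by rw [hKMempty]; exact Finset.notMem_empty _
      rw [hKM, Finset.mem_filter] at this
      push_neg at this
      have h2 := this (Finset.mem_univ i)
      tauto
    have hall := cycle_const B hno i₀ hi₀B
    have hMME : MM = ∅ := by
      rw [Finset.eq_empty_iff_forall_notMem]
      intro i hi
      rw [hMM, Finset.mem_filter] at hi
      exact hi.2.1 (hall i)
    show MM.card = 0
    rw [hMME, Finset.card_empty]
  -- final combination
  have hAbd : 2*π/3 ≤ A₀ := by
    rw [hA_eq]; linarith [beta_le]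
  have hBbd : 5*π/12 ≤ B₀ := by
    rw [hB_eq]; linarith [beta_ge]
  have hABC : 2*π ≤ A₀ + 2*B₀ + π/3 := by
    rw [hA_eq, hB_eq]; ring_nf; linarith
  have := combin k m₁ m₂ n A₀ B₀ hn hcards hAbd hBbd hABC hW hpar h0
  linarith


-- pure angular pigeonhole
lemma angle_pigeon {n : ℕ} (hn : 6 ≤ n) (θ : Fin n → ℝ)
    (hrange : ∀ i, -π < θ i ∧ θ i ≤ π)
    (hcos : ∀ i, Real.cos (θ i) < 1/2)
    (hpair : ∀ i j, i ≠ j → Real.cos (θ i - θ j) ≤ 1/2) : False := by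
  have hπ := Real.pi_pos
  have hsplit : ∀ i, π/3 < θ i ∨ θ i < -π/3 := by
    intro i
    by_contra hcon
    push_neg at hcon
    obtain ⟨h1, h2⟩ := hcon
    have habs : |θ i| ≤ π/3 := abs_le.mpr ⟨by linarith, h1⟩
    have : Real.cos (π/3) ≤ Real.cos |θ i| :=
      Real.cos_le_cos_of_nonneg_of_le_pi (abs_nonneg _) (by linarith) habs
    rw [Real.cos_abs, Real.cos_pi_div_three] at this
    linarith [hcos i]
  set φ : Fin n → ℝ := fun i => if θ i ≤ π/3 then θ i + 2*π else θ i with hφ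
  have hφrange : ∀ i, π/3 < φ i ∧ φ i < 5*π/3 := by
    intro i
    rw [hφ]
    simp only
    split_ifs with h
    · rcases hsplit i with h' | h'
      · linarith
      · constructor <;> [linarith [(hrange i).1]; linarith]
    · push_neg at h
      constructor <;> [exact h; linarith [(hrange i).2]]
  have hφcos : ∀ i j, Real.cos (φ i - φ j) = Real.cos (θ i - θ j) := by
    intro i j
    rw [hφ]
    simp only
    split_ifs with h1 h2 h2
    · rw [show θ i + 2*π - (θ j + 2*π) = θ i - θ j by ring]
    · rw [show θ i + 2*π - θ j = (θ i - θ j) + 2*π by ring, Real.cos_add_two_pi]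
    · rw [show θ i - (θ j + 2*π) = (θ i - θ j) - 2*π by ring, Real.cos_sub_two_pi]
    · rfl
  have hφsep : ∀ i j, i ≠ j → π/3 ≤ |φ i - φ j| := by
    intro i j hij
    by_contra hcon
    push_neg at hcon
    have h1 : Real.cos (π/3) < Real.cos |φ i - φ j| :=
      Real.cos_lt_cos_of_nonneg_of_le_pi (abs_nonneg _) (by linarith) hcon
    rw [Real.cos_abs, Real.cos_pi_div_three, hφcos i j] at h1
    linarith [hpair i j hij]
  -- pigeonhole on ψ i = (φ i - π/3)/(π/3) ∈ (0,4)
  set ψ : Fin n → ℝ := fun i => (φ i - π/3)/(π/3) with hψ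
  have hψrange : ∀ i, 0 < ψ i ∧ ψ i < 4 := by
    intro i
    obtain ⟨h1, h2⟩ := hφrange i
    constructor
    · apply div_pos (by linarith) (by linarith)
    · rw [hψ]; simp only
      rw [div_lt_iff₀ (by linarith)]
      linarith
  have hψsep : ∀ i j, i ≠ j → 1 ≤ |ψ i - ψ j| := by
    intro i j hij
    have h := hφsep i j hij
    rw [hψ]
    simp only
    rw [div_sub_div_same, abs_div, abs_of_pos (by linarith : (0:ℝ) < π/3),
      le_div_iff₀ (by linarith : (0:ℝ) < π/3), one_mul]
    calc π/3 ≤ |φ i - φ j| := h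
    _ = |φ i - π/3 - (φ j - π/3)| := by ring_nf
  have hmaps : ∀ i : Fin n, (⌊ψ i⌋ : ℤ) ∈ Finset.Icc (0:ℤ) 3 := by
    intro i
    obtain ⟨h1, h2⟩ := hψrange i
    rw [Finset.mem_Icc]
    constructor
    · exact Int.floor_nonneg.mpr h1.le
    · have : (⌊ψ i⌋ : ℤ) < 4 := by
        have := Int.floor_le (ψ i)
        exact_mod_cast Int.floor_lt.mpr (by exact_mod_cast h2)
      omega
  have hcard : (Finset.Icc (0:ℤ) 3).card < (Finset.univ : Finset (Fin n)).card := by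
    rw [Int.card_Icc, Finset.card_univ, Fintype.card_fin]
    norm_num
    omega
  obtain ⟨i, -, j, -, hij, heq⟩ :=
    Finset.exists_ne_map_eq_of_card_lt_of_maps_to hcard (fun i _ => hmaps i)
  have h1 := Int.floor_le (ψ i)
  have h2 := Int.lt_floor_add_one (ψ i)
  have h3 := Int.floor_le (ψ j)
  have h4 := Int.lt_floor_add_one (ψ j)
  rw [heq] at h1 h2
  have hge := hψsep i j hij
  have hlt : |ψ i - ψ j| < 1 := abs_sub_lt_iff.mpr ⟨by linarith, by linarith⟩
  linarith



noncomputable def toC (x : EuclideanSpace ℝ (Fin 2)) : ℂ := ⟨x 0, x 1⟩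

lemma toC_abs (x : EuclideanSpace ℝ (Fin 2)) : ‖toC x‖ = ‖x‖ := by
  rw [Complex.norm_def, Complex.normSq_apply, EuclideanSpace.norm_eq]
  simp [toC, Fin.sum_univ_two, Real.norm_eq_abs, sq_abs]
  ring_nf

lemma toC_inner (x y : EuclideanSpace ℝ (Fin 2)) :
    ⟪x, y⟫ = (toC x).re * (toC y).re + (toC x).im * (toC y).im := by
  simp [toC, PiLp.inner_apply, Fin.sum_univ_two, RCLike.inner_apply, conj_trivial]
  ring

lemma hex_dir {n : ℕ} (hn : 6 ≤ n) (ρ : ℝ) (hρ : 0 < ρ)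
    (v : Fin n → EuclideanSpace ℝ (Fin 2)) (hnorm : ∀ i, ‖v i‖ = ρ)
    (hsep : ∀ i j, i ≠ j → ρ ≤ ‖v i - v j‖)
    (w : EuclideanSpace ℝ (Fin 2)) (hw : w ≠ 0) :
    ∃ i, ρ * ‖w‖ ≤ 2 * ⟪v i, w⟫ := by
  by_contra hcon
  push_neg at hcon
  have hwnorm : 0 < ‖w‖ := norm_pos_iff.mpr hw
  set ζ : ℂ := toC w with hζ
  have hζabs : ‖ζ‖ = ‖w‖ := toC_abs w
  have hζ0 : ζ ≠ 0 := by
    intro h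
    rw [h, norm_zero] at hζabs
    linarith
  set z : Fin n → ℂ := fun i => toC (v i) with hz
  have hzabs : ∀ i, ‖z i‖ = ρ := fun i => by rw [hz]; simp [toC_abs, hnorm]
  have hz0 : ∀ i, z i ≠ 0 := by
    intro i h
    have := hzabs i
    rw [h, norm_zero] at this
    linarith
  set θ : Fin n → ℝ := fun i => (z i / ζ).arg with hθ
  have hne : ∀ i, z i / ζ ≠ 0 := fun i => div_ne_zero (hz0 i) hζ0
  have habsq : ∀ i, ‖z i / ζ‖ = ρ / ‖w‖ := by
    intro i
    rw [norm_div, hzabs, hζabs]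
  have hNζ : Complex.normSq ζ = ‖w‖^2 := by
    rw [← Complex.sq_norm, hζabs]
  have hzi : ∀ i, toC (v i) = z i := fun i => rfl
  have hQ : (ζ.re)^2 + (ζ.im)^2 = ‖w‖^2 := by
    rw [← hNζ, Complex.normSq_apply]; ring
  have hcosi : ∀ i, Real.cos (θ i) = ((z i).re * ζ.re + (z i).im * ζ.im)/(ρ * ‖w‖) := by
    intro i
    rw [hθ]
    simp only
    rw [Complex.cos_arg (hne i), habsq, Complex.div_re, hNζ]
    field_simp
  have hsini : ∀ i, Real.sin (θ i) = ((z i).im * ζ.re - (z i).re * ζ.im)/(ρ * ‖w‖) := by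
    intro i
    rw [hθ]
    simp only
    rw [Complex.sin_arg, habsq, Complex.div_im, hNζ]
    field_simp
  have hcosθ : ∀ i, Real.cos (θ i) = ⟪v i, w⟫ / (ρ * ‖w‖) := by
    intro i
    rw [hcosi, toC_inner, hzi]
  have hpaircos : ∀ i j, Real.cos (θ i - θ j) = ⟪v i, v j⟫ / ρ^2 := by
    intro i j
    rw [Real.cos_sub, hcosi i, hcosi j, hsini i, hsini j, toC_inner, hzi, hzi]
    rw [div_mul_div_comm, div_mul_div_comm, ← add_div,
      div_eq_div_iff (by positivity) (by positivity)]
    linear_combination (((z i).re * (z j).re + (z i).im * (z j).im) * ρ^2) * hQ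
  -- hypotheses of angle_pigeon
  apply angle_pigeon hn θ
  · intro i
    exact ⟨Complex.neg_pi_lt_arg _, Complex.arg_le_pi _⟩
  · intro i
    rw [hcosθ]
    rw [div_lt_iff₀ (by positivity)]
    have := hcon i
    linarith
  · intro i j hij
    rw [hpaircos]
    rw [div_le_iff₀ (by positivity)]
    have hd := hsep i j hij
    have hexp : ‖v i - v j‖^2 = ρ^2 - 2*⟪v i, v j⟫ + ρ^2 := by
      rw [norm_sub_sq_real, hnorm, hnorm]
    nlinarith [hd, hρ, sq_nonneg (‖v i - v j‖ - ρ)]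

end Aux

theorem stmt_12 (r s : ℝ) (hs : 0 < s) (hsr : s < r) (hr : r < 1)
    (h : ∃ P : DiscPacking, IsCompactPacking P ∧
      (∃ d ∈ P.discs, d.2 = 1) ∧ (∃ d ∈ P.discs, d.2 = r) ∧ (∃ d ∈ P.discs, d.2 = s) ∧
      (∀ d ∈ P.discs, d.2 = 1 ∨ d.2 = r ∨ d.2 = s)) :
    5 - 2*Real.sqrt 6 ≤ s / r := by
  classical
  obtain ⟨P, ⟨hne, hcor⟩, ⟨u, hu, hu1⟩, -, ⟨ds, hds, hds2⟩, hclass⟩ := h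
  by_cases hA : ∀ d ∈ P.discs, d.2 = s → ∀ e ∈ P.discs, Tangent d e → e.2 = s
  · -- Case A : all neighbours of small discs are small ⇒ contradiction
    exfalso
    have hs1 : s < 1 := hsr.trans hr
    have hδ : 0 < 2*s*(1-s) := by nlinarith
    -- one descent step
    have hstep : ∀ d, d ∈ P.discs → d.2 = s →
        ∃ d', d' ∈ P.discs ∧ d'.2 = s ∧
          dist d'.1 u.1 ^ 2 ≤ dist d.1 u.1 ^ 2 - 2*s*(1-s) := by
      intro d hd hd2s
      obtain ⟨n, hn3, c, hinj, hmem, htan, -, -, hsum⟩ := hcor d hd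
      haveI : NeZero n := ⟨by omega⟩
      have hall : ∀ i, (c i).2 = s := fun i => hA d hd hd2s (c i) (hmem i) (htan i)
      -- n = 6
      have hang : ∀ i : Fin n,
          contactAngle (c i).2 d.2 ((c ⟨(i.val + 1) % n, Nat.mod_lt _ i.pos⟩).2) = π/3 := by
        intro i
        rw [hall i, hall _, hd2s]
        show Real.arccos (Qv s s s) = π/3
        rw [Qss hs, arccos_half_eq]
      rw [Finset.sum_congr rfl (fun i _ => hang i), Finset.sum_const, Finset.card_univ,
        Fintype.card_fin, nsmul_eq_mul] at hsum
      have hπ := Real.pi_pos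
      have hn6 : (n : ℝ) = 6 := by
        field_simp at hsum
        nlinarith [hsum]
      have hn6' : 6 ≤ n := by
        have : n = 6 := by exact_mod_cast hn6
        omega
      -- geometry
      have hdu : d ≠ u := by
        intro hh
        rw [hh, hu1] at hd2s
        linarith
      have hD : 1 + s ≤ dist d.1 u.1 := by
        have := P.separated d hd u hu hdu
        rw [hd2s, hu1] at this
        linarith
      set w : EuclideanSpace ℝ (Fin 2) := u.1 - d.1 with hwdef
      have hwnorm : ‖w‖ = dist d.1 u.1 := by
        rw [hwdef, ← dist_eq_norm, dist_comm]
      have hw0 : w ≠ 0 := by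
        intro hh
        rw [hh, norm_zero] at hwnorm
        linarith
      set v : Fin n → EuclideanSpace ℝ (Fin 2) := fun i => (c i).1 - d.1 with hvdef
      have hvnorm : ∀ i, ‖v i‖ = 2*s := by
        intro i
        rw [hvdef]
        simp only
        rw [← dist_eq_norm, dist_comm,
          show dist d.1 (c i).1 = d.2 + (c i).2 from htan i, hd2s, hall i]
        ring
      have hvsep : ∀ i j, i ≠ j → 2*s ≤ ‖v i - v j‖ := by
        intro i j hij
        have hne' : c i ≠ c j := fun hh => hij (hinj hh)
        have hthis := P.separated (c i) (hmem i) (c j) (hmem j) hne'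
        rw [hall i, hall j] at hthis
        have hvv : v i - v j = (c i).1 - (c j).1 := by
          rw [hvdef]; simp only; abel
        rw [hvv, ← dist_eq_norm]
        linarith [hthis]
      obtain ⟨i, hi⟩ := hex_dir hn6' (2*s) (by linarith) v hvnorm hvsep w hw0
      refine ⟨c i, hmem i, hall i, ?_⟩
      have hdist : dist (c i).1 u.1 = ‖v i - w‖ := by
        rw [dist_eq_norm, hvdef, hwdef]
        simp only
        congr 1
        abel
      rw [hdist, norm_sub_sq_real, hvnorm i]
      have h2 : ‖w‖ = dist d.1 u.1 := hwnorm
      nlinarith [hi, hD, hs, h2]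
    -- iterate
    have hiter : ∀ k : ℕ, ∃ d, d ∈ P.discs ∧ d.2 = s ∧
        dist d.1 u.1 ^ 2 ≤ dist ds.1 u.1 ^ 2 - k*(2*s*(1-s)) := by
      intro k
      induction k with
      | zero => exact ⟨ds, hds, hds2, by simp⟩
      | succ k ih =>
        obtain ⟨d, h1, h2, h3⟩ := ih
        obtain ⟨d', h1', h2', h3'⟩ := hstep d h1 h2
        refine ⟨d', h1', h2', ?_⟩
        push_cast
        push_cast at h3
        linarith
    obtain ⟨K, hK⟩ := exists_nat_gt (dist ds.1 u.1 ^ 2 / (2*s*(1-s)))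
    obtain ⟨d, -, -, h3⟩ := hiter K
    rw [div_lt_iff₀ hδ] at hK
    nlinarith [sq_nonneg (dist d.1 u.1), h3, hK]
  · -- Case B : corona analysis
    push_neg at hA
    obtain ⟨d, hd, hd2s, e, he, hte, hes⟩ := hA
    obtain ⟨n, hn3, c, hinj, hmem, htan, -, hcompl, hsum⟩ := hcor d hd
    haveI : NeZero n := ⟨by omega⟩
    have hidx : ∀ i : Fin n, (⟨(i.val + 1) % n, Nat.mod_lt _ i.pos⟩ : Fin n) = i + 1 := by
      intro i
      apply Fin.ext
      rw [Fin.val_add, Fin.val_one']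
      rw [Nat.mod_eq_of_lt (show 1 < n by omega)]
    have hsum' : ∑ i : Fin n,
        Real.arccos (Qv ((c i).2) s ((c (i+1)).2)) = 2 * π := by
      rw [← hsum]
      apply Finset.sum_congr rfl
      intro i _
      rw [hidx i, hd2s]
      rfl
    obtain ⟨i₁, hi₁⟩ := hcompl e he hte
    have hex : ∃ i : Fin n, (c i).2 ≠ s := ⟨i₁, by rw [hi₁]; exact hes⟩
    have hρbig : ∀ i : Fin n, (c i).2 ≠ s → r ≤ (c i).2 := by
      intro i hi
      rcases hclass (c i) (hmem i) with h1 | h1 | h1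
      · rw [h1]; linarith
      · rw [h1]
      · exact absurd h1 hi
    exact coronaBound r s hs hsr n hn3 (fun i => (c i).2) hρbig hex hsum'
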